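/- Let Z = [z_1, …, z_N] ∈ ℝ^{m×N} with ‖z_i‖ ≤ R for all i, let β̃_est = (−β̂, 1) and β̃_true = (−β*, 1) satisfy ‖Z'β̃_est‖_1 ≤ γ_N, ‖Z'β̃_true‖_1 ≤ γ_N, and ‖β̃_est‖_* ≤ ‖β̃_true‖_*. Suppose the restricted eigenvalue condition holds: v'ZZ'v ≥ α ‖v‖_2² for all v in the cone A(β*) = cone{v : ‖β̃_true + v‖_* ≤ ‖β̃_true‖_*}, with α > 0. Then ‖β̂ − β*‖_2 ≤ (2 R γ_N / α) Ψ(β*), where Ψ(β*) = sup{‖v‖_* : v ∈ A(β*), ‖v‖_2 = 1}. -/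

import Mathlib

private lemma nn_zero' {n : ℕ} (nn : (Fin n → ℝ) → ℝ)
    (hnnh : ∀ (c : ℝ) z, nn (c • z) = |c| * nn z) : nn 0 = 0 := by
  simpa using hnnh 0 0

private lemma nn_sum_le' {n : ℕ} (nn : (Fin n → ℝ) → ℝ)
    (hnnh : ∀ (c : ℝ) z, nn (c • z) = |c| * nn z)
    (hnnt : ∀ z w, nn (z + w) ≤ nn z + nn w)
    {ι : Type*} (s : Finset ι) (f : ι → (Fin n → ℝ)) :
    nn (∑ i ∈ s, f i) ≤ ∑ i ∈ s, nn (f i) := by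
  classical
  induction s using Finset.induction with
  | empty => simp [nn_zero' nn hnnh]
  | insert _ _ h ih =>
    rw [Finset.sum_insert h, Finset.sum_insert h]
    exact le_trans (hnnt _ _) (by linarith)

private lemma nn_lower' {n : ℕ} (nn : (Fin (n + 1) → ℝ) → ℝ)
    (hnn0 : ∀ z, 0 ≤ nn z) (hnnh : ∀ (c : ℝ) z, nn (c • z) = |c| * nn z)
    (hnnt : ∀ z w, nn (z + w) ≤ nn z + nn w) (hnnd : ∀ z, nn z = 0 → z = 0) :
    ∃ ε > 0, ∀ z, ε * ‖z‖ ≤ nn z := by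
  set K : ℝ := ∑ j, nn (Pi.single j 1) with hKdef
  have hK0 : 0 ≤ K := Finset.sum_nonneg fun j _ => hnn0 _
  have hsub : ∀ z : Fin (n+1) → ℝ, nn z ≤ K * ‖z‖ := by
    intro z
    have hrep : z = ∑ j, (z j) • (fun k => if k = j then (1:ℝ) else 0) := by
      funext k
      simp [Finset.sum_apply, Pi.single_apply]
    have hsingle : ∀ j : Fin (n+1), (fun k => if k = j then (1:ℝ) else 0) = Pi.single j (1:ℝ) := by
      intro j; funext k; simp [Pi.single_apply]
    have step1 : nn z ≤ ∑ j, nn ((z j) • (fun k => if k = j then (1:ℝ) else 0)) := by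
      conv_lhs => rw [hrep]
      exact nn_sum_le' nn hnnh hnnt _ _
    calc nn z ≤ ∑ j, nn ((z j) • (fun k => if k = j then (1:ℝ) else 0)) := step1
      _ ≤ ∑ j, nn (Pi.single j (1:ℝ)) * ‖z‖ := by
          refine Finset.sum_le_sum fun j _ => ?_
          rw [hnnh, hsingle]
          have h1 : |z j| ≤ ‖z‖ := by
            simpa [Real.norm_eq_abs] using norm_le_pi_norm z j
          have := mul_le_mul_of_nonneg_left h1 (hnn0 (Pi.single j 1))
          linarith [this]
      _ = K * ‖z‖ := by rw [← Finset.sum_mul]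
  have hlip : ∀ z w : Fin (n+1) → ℝ, nn z - nn w ≤ K * ‖z - w‖ := by
    intro z w
    have h1 : nn z ≤ nn w + nn (z - w) := by
      simpa using hnnt w (z - w)
    linarith [hsub (z - w)]
  have hcont : Continuous nn := by
    refine (LipschitzWith.of_dist_le_mul (K := K.toNNReal) (f := nn) ?_).continuous
    intro z w
    rw [Real.dist_eq, dist_eq_norm]
    have h1 := hlip z w
    have h2 := hlip w z
    have h3 : ‖w - z‖ = ‖z - w‖ := norm_sub_rev w z
    have h4 : K ≤ (K.toNNReal : ℝ) := Real.le_coe_toNNReal K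
    have h5 : (0:ℝ) ≤ ‖z - w‖ := norm_nonneg _
    rw [abs_le]
    constructor <;> nlinarith
  obtain ⟨z₀, hz₀s, hmin⟩ := (isCompact_sphere (0 : Fin (n+1) → ℝ) 1).exists_isMinOn
    (NormedSpace.sphere_nonempty.mpr zero_le_one) hcont.continuousOn
  have hz₀ : ‖z₀‖ = 1 := mem_sphere_zero_iff_norm.mp hz₀s
  refine ⟨nn z₀, ?_, ?_⟩
  · rcases (hnn0 z₀).lt_or_eq with h | h
    · exact h
    · exfalso
      have : z₀ = 0 := hnnd z₀ h.symm
      rw [this] at hz₀; simp at hz₀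
  · intro z
    rcases eq_or_ne z 0 with rfl | hz
    · simp [nn_zero' nn hnnh, hnn0]
    · have ht : 0 < ‖z‖ := norm_pos_iff.mpr hz
      set w : Fin (n+1) → ℝ := ‖z‖⁻¹ • z with hw
      have hwn : ‖w‖ = 1 := by
        rw [hw, norm_smul, norm_inv, norm_norm]
        field_simp
      have hmem : w ∈ Metric.sphere (0 : Fin (n+1) → ℝ) 1 :=
        mem_sphere_zero_iff_norm.mpr hwn
      have h1 : nn z₀ ≤ nn w := hmin hmem
      have h2 : nn z = ‖z‖ * nn w := by
        have hzw : z = ‖z‖ • w := by rw [hw, smul_inv_smul₀ (ne_of_gt ht)]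
        conv_lhs => rw [hzw]
        rw [hnnh, abs_of_pos ht]
      nlinarith

open Matrix Set

/-- Estimation-error bound: under feasibility of β̂ and β*, optimality ‖β̃_est‖_* ≤ ‖β̃_true‖_*,
and the restricted eigenvalue condition on the cone A(β*), we have
‖β̂ − β*‖₂ ≤ (2Rγ_N/α) Ψ(β*). -/
theorem stmt8 (m N : ℕ) (nn : (Fin (m + 1) → ℝ) → ℝ)
    (hnn0 : ∀ z, 0 ≤ nn z) (hnnh : ∀ (c : ℝ) z, nn (c • z) = |c| * nn z)
    (hnnt : ∀ z w, nn (z + w) ≤ nn z + nn w) (hnnd : ∀ z, nn z = 0 → z = 0)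
    (dn : (Fin (m + 1) → ℝ) → ℝ)
    (hdn : ∀ θ, dn θ = sSup {x | ∃ z, nn z ≤ 1 ∧ x = θ ⬝ᵥ z})
    (Z : Matrix (Fin (m + 1)) (Fin N) ℝ) (R γN α : ℝ)
    (hRcol : ∀ i, nn (fun j => Z j i) ≤ R)
    (βhat βstar : Fin m → ℝ) (bte btt : Fin (m + 1) → ℝ)
    (hbte : bte = Fin.snoc (-βhat) 1) (hbtt : btt = Fin.snoc (-βstar) 1)
    (hfeas1 : ∑ i, |∑ j, Z j i * bte j| ≤ γN)
    (hfeas2 : ∑ i, |∑ j, Z j i * btt j| ≤ γN)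
    (hopt : dn bte ≤ dn btt)
    (hα : 0 < α)
    (Acone : Set (Fin (m + 1) → ℝ))
    (hAcone : Acone = {w | ∃ c : ℝ, 0 ≤ c ∧ ∃ v, dn (btt + v) ≤ dn btt ∧ w = c • v})
    (hRE : ∀ v ∈ Acone, α * (∑ j, v j ^ 2) ≤ ∑ i, (∑ j, Z j i * v j) ^ 2) :
    Real.sqrt (∑ j, (βhat j - βstar j) ^ 2) ≤
      (2 * R * γN / α) * sSup {x | ∃ v ∈ Acone, (∑ j, v j ^ 2) = 1 ∧ x = dn v} := by
  obtain ⟨ε, hε, hlow⟩ := nn_lower' nn hnn0 hnnh hnnt hnnd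
  -- basic facts about the dual set
  have hzball : nn (0 : Fin (m+1) → ℝ) ≤ 1 := by
    rw [nn_zero' nn hnnh]; exact zero_le_one
  have hne : ∀ θ : Fin (m+1) → ℝ, ({x | ∃ z, nn z ≤ 1 ∧ x = θ ⬝ᵥ z}).Nonempty :=
    fun θ => ⟨θ ⬝ᵥ 0, 0, hzball, rfl⟩
  have hznorm : ∀ z : Fin (m+1) → ℝ, nn z ≤ 1 → ∀ j, |z j| ≤ 1/ε := by
    intro z hz j
    have h1 : |z j| ≤ ‖z‖ := by simpa [Real.norm_eq_abs] using norm_le_pi_norm z j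
    have h2 := hlow z
    rw [le_div_iff₀ hε]
    nlinarith [norm_nonneg z]
  have hbdd : ∀ θ : Fin (m+1) → ℝ, BddAbove {x | ∃ z, nn z ≤ 1 ∧ x = θ ⬝ᵥ z} := by
    intro θ
    refine ⟨(∑ j, |θ j|) * (1/ε), ?_⟩
    rintro x ⟨z, hz, rfl⟩
    calc θ ⬝ᵥ z ≤ ∑ j, |θ j| * |z j| := by
          refine Finset.sum_le_sum fun j _ => ?_
          rw [← abs_mul]; exact le_abs_self _
      _ ≤ ∑ j, |θ j| * (1/ε) :=
          Finset.sum_le_sum fun j _ =>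
            mul_le_mul_of_nonneg_left (hznorm z hz j) (abs_nonneg _)
      _ = (∑ j, |θ j|) * (1/ε) := by rw [← Finset.sum_mul]
  have hdual_ge : ∀ (θ z : Fin (m+1) → ℝ), nn z ≤ 1 → θ ⬝ᵥ z ≤ dn θ := by
    intro θ z hz
    rw [hdn]
    exact le_csSup (hbdd θ) ⟨z, hz, rfl⟩
  have hdn_nonneg : ∀ θ, 0 ≤ dn θ := by
    intro θ
    have := hdual_ge θ 0 hzball
    simpa using this
  have hdual : ∀ (θ z : Fin (m+1) → ℝ), θ ⬝ᵥ z ≤ dn θ * nn z := by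
    intro θ z
    rcases eq_or_lt_of_le (hnn0 z) with h | h
    · have hz0 : z = 0 := hnnd z h.symm
      rw [hz0]
      simp [nn_zero' nn hnnh]
    · have hw : nn ((nn z)⁻¹ • z) ≤ 1 := by
        rw [hnnh, abs_of_pos (by positivity)]
        rw [inv_mul_cancel₀ (ne_of_gt h)]
      have h1 := hdual_ge θ _ hw
      have h2 : θ ⬝ᵥ ((nn z)⁻¹ • z) = (nn z)⁻¹ * (θ ⬝ᵥ z) := by
        simp [dotProduct, Finset.mul_sum]; ring_nf
        exact Finset.sum_congr rfl fun j _ => by ring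
      rw [h2] at h1
      have := mul_le_mul_of_nonneg_left h1 (le_of_lt h)
      rw [← mul_assoc, mul_inv_cancel₀ (ne_of_gt h), one_mul] at this
      linarith
  -- the error vector
  set u : Fin (m+1) → ℝ := bte - btt with hu
  clear_value u
  have hbu : btt + u = bte := by rw [hu]; ring
  have hucone : dn (btt + u) ≤ dn btt := by rw [hbu]; exact hopt
  have hu_mem : u ∈ Acone := by
    rw [hAcone]; exact ⟨1, zero_le_one, u, hucone, (one_smul ℝ u).symm⟩
  -- sum of squares identities
  have huval : ∀ j : Fin m, u (Fin.castSucc j) = βstar j - βhat j := by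
    intro j
    simp [hu, hbte, hbtt, Fin.snoc_castSucc]
    ring
  have hulast : u (Fin.last m) = 0 := by
    simp [hu, hbte, hbtt]
  have hS : ∑ j, u j ^ 2 = ∑ j, (βhat j - βstar j) ^ 2 := by
    rw [Fin.sum_univ_castSucc, hulast]
    simp only [huval]
    have h02 : (0:ℝ) ^ 2 = 0 := by norm_num
    rw [h02, add_zero]
    exact Finset.sum_congr rfl fun j _ => by ring
  set S : ℝ := ∑ j, u j ^ 2 with hSdef
  have hS0 : 0 ≤ S := Finset.sum_nonneg fun j _ => sq_nonneg _
  have hγ : 0 ≤ γN := le_trans (Finset.sum_nonneg fun i _ => abs_nonneg _) hfeas1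
  have hZu : ∀ i, ∑ j, Z j i * u j = (∑ j, Z j i * bte j) - (∑ j, Z j i * btt j) := by
    intro i
    rw [← Finset.sum_sub_distrib]
    exact Finset.sum_congr rfl fun j _ => by simp [hu]; ring
  have hsum2γ : ∑ i, |∑ j, Z j i * u j| ≤ 2 * γN := by
    calc ∑ i, |∑ j, Z j i * u j|
        ≤ ∑ i, (|∑ j, Z j i * bte j| + |∑ j, Z j i * btt j|) := by
          refine Finset.sum_le_sum fun i _ => ?_
          rw [hZu i]; exact abs_sub _ _
      _ = (∑ i, |∑ j, Z j i * bte j|) + ∑ i, |∑ j, Z j i * btt j| :=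
          Finset.sum_add_distrib
      _ ≤ 2 * γN := by linarith
  set Ψ : ℝ := sSup {x | ∃ v ∈ Acone, (∑ j, v j ^ 2) = 1 ∧ x = dn v} with hΨdef
  have hΨ0 : 0 ≤ Ψ := by
    apply Real.sSup_nonneg
    rintro x ⟨v, _, _, rfl⟩
    exact hdn_nonneg v
  clear_value S Ψ
  rcases eq_or_lt_of_le hS0 with hSz | hSpos
  · -- degenerate case S = 0
    rw [← hS, ← hSz, Real.sqrt_zero]
    by_cases hR : 0 ≤ R
    · exact mul_nonneg (by positivity) hΨ0
    · push_neg at hR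
      have hNempty : IsEmpty (Fin N) := by
        constructor; intro i
        exact absurd (le_trans (hnn0 _) (hRcol i)) (not_le.2 hR)
      have hΨempty : {x | ∃ v ∈ Acone, (∑ j, v j ^ 2) = 1 ∧ x = dn v} = ∅ := by
        ext x
        simp only [mem_setOf_eq, mem_empty_iff_false, iff_false]
        rintro ⟨v, hv, h1, rfl⟩
        have := hRE v hv
        rw [h1, Finset.univ_eq_empty, Finset.sum_empty] at this
        linarith
      rw [hΨdef, hΨempty, Real.sSup_empty, mul_zero]
  · -- main case S > 0
    set t : ℝ := Real.sqrt S with htdef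
    have ht : 0 < t := Real.sqrt_pos.mpr hSpos
    have ht2 : t ^ 2 = S := Real.sq_sqrt hS0
    set v : Fin (m+1) → ℝ := t⁻¹ • u with hv
    have hv_mem : v ∈ Acone := by
      rw [hAcone]
      exact ⟨t⁻¹, inv_nonneg.mpr ht.le, u, hucone, rfl⟩
    have hv_unit : ∑ j, v j ^ 2 = 1 := by
      have : ∑ j, v j ^ 2 = t⁻¹ ^ 2 * S := by
        rw [hSdef, Finset.mul_sum]
        exact Finset.sum_congr rfl fun j _ => by simp [hv]; ring
      rw [this, ← ht2]
      field_simp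
    clear_value t v
    have hR : 0 ≤ R := by
      by_contra hRneg
      push_neg at hRneg
      have hNempty : IsEmpty (Fin N) := by
        constructor; intro i
        exact absurd (le_trans (hnn0 _) (hRcol i)) (not_le.2 hRneg)
      have := hRE u hu_mem
      rw [Finset.univ_eq_empty (α := Fin N), Finset.sum_empty] at this
      nlinarith
    have hΨbdd : BddAbove {x | ∃ v ∈ Acone, (∑ j, v j ^ 2) = 1 ∧ x = dn v} := by
      refine ⟨(m+1 : ℝ) * (1/ε), ?_⟩
      rintro x ⟨w, hw, hw1, rfl⟩
      rw [hdn]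
      apply csSup_le (hne w)
      rintro y ⟨z, hz, rfl⟩
      have hwj : ∀ j, |w j| ≤ 1 := by
        intro j
        have h1 : w j ^ 2 ≤ 1 := by
          rw [← hw1]
          exact Finset.single_le_sum (fun j _ => sq_nonneg (w j)) (Finset.mem_univ j)
        nlinarith [abs_nonneg (w j), sq_abs (w j)]
      calc w ⬝ᵥ z ≤ ∑ j, |w j| * |z j| := by
            refine Finset.sum_le_sum fun j _ => ?_
            rw [← abs_mul]; exact le_abs_self _
        _ ≤ ∑ j : Fin (m+1), 1 * (1/ε) := by
            refine Finset.sum_le_sum fun j _ => ?_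
            exact mul_le_mul (hwj j) (hznorm z hz j) (abs_nonneg _) zero_le_one
        _ = (m+1 : ℝ) * (1/ε) := by simp
    have hdnv_le : dn v ≤ Ψ := by
      rw [hΨdef]
      exact le_csSup hΨbdd ⟨v, hv_mem, hv_unit, rfl⟩
    have hdnu_le : dn u ≤ t * dn v := by
      rw [hdn u]
      apply csSup_le (hne u)
      rintro x ⟨z, hz, rfl⟩
      have huv : ∀ j, u j = t * v j := by
        intro j
        rw [hv]
        simp only [Pi.smul_apply, smul_eq_mul]
        field_simp
      have h1 : u ⬝ᵥ z = t * (v ⬝ᵥ z) := by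
        simp only [dotProduct, Finset.mul_sum]
        exact Finset.sum_congr rfl fun j _ => by rw [huv j]; ring
      rw [h1]
      exact mul_le_mul_of_nonneg_left (hdual_ge v z hz) ht.le
    -- the key chain
    have hkey : α * S ≤ 2 * γN * (R * dn u) := by
      have h1 := hRE u hu_mem
      rw [← hSdef] at h1
      have h2 : ∀ i, (∑ j, Z j i * u j) ^ 2 ≤ |∑ j, Z j i * u j| * (R * dn u) := by
        intro i
        have habs : |∑ j, Z j i * u j| ≤ R * dn u := by
          have hcol : u ⬝ᵥ (fun j => Z j i) = ∑ j, Z j i * u j := by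
            simp [dotProduct]
            exact Finset.sum_congr rfl fun j _ => by ring
          have hup : ∑ j, Z j i * u j ≤ dn u * nn (fun j => Z j i) := by
            rw [← hcol]; exact hdual _ _
          have hdown : -(∑ j, Z j i * u j) ≤ dn u * nn (fun j => Z j i) := by
            have hcol2 : u ⬝ᵥ (fun j => -(Z j i)) = -(∑ j, Z j i * u j) := by
              simp [dotProduct, ← Finset.sum_neg_distrib]
              exact Finset.sum_congr rfl fun j _ => by ring
            have hnneg : nn (fun j => -(Z j i)) = nn (fun j => Z j i) := by
              have : (fun j => -(Z j i)) = (-1 : ℝ) • (fun j => Z j i) := by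
                funext j; simp
              rw [this, hnnh]; simp
            have := hdual u (fun j => -(Z j i))
            rw [hcol2, hnneg] at this
            exact this
          have hb : dn u * nn (fun j => Z j i) ≤ R * dn u := by
            rw [mul_comm R (dn u)]
            exact mul_le_mul_of_nonneg_left (hRcol i) (hdn_nonneg u)
          exact abs_le.mpr ⟨by linarith, by linarith⟩
        calc (∑ j, Z j i * u j) ^ 2 = |∑ j, Z j i * u j| * |∑ j, Z j i * u j| := by
              rw [← abs_mul, abs_mul_self]; ring
          _ ≤ |∑ j, Z j i * u j| * (R * dn u) :=
              mul_le_mul_of_nonneg_left habs (abs_nonneg _)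
      have h3 : ∑ i, (∑ j, Z j i * u j) ^ 2 ≤ (∑ i, |∑ j, Z j i * u j|) * (R * dn u) := by
        rw [Finset.sum_mul]
        exact Finset.sum_le_sum fun i _ => h2 i
      have hRdnu : 0 ≤ R * dn u := mul_nonneg hR (hdn_nonneg u)
      have h4 : (∑ i, |∑ j, Z j i * u j|) * (R * dn u) ≤ 2 * γN * (R * dn u) :=
        mul_le_mul_of_nonneg_right hsum2γ hRdnu
      linarith
    -- conclude
    have hchain : α * t ^ 2 ≤ 2 * γN * R * t * Ψ := by
      have h5 : 2 * γN * (R * dn u) ≤ 2 * γN * (R * (t * dn v)) := by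
        have := mul_le_mul_of_nonneg_left hdnu_le hR
        nlinarith
      have h6 : 2 * γN * (R * (t * dn v)) ≤ 2 * γN * R * t * Ψ := by
        nlinarith [mul_nonneg (mul_nonneg hγ hR) ht.le]
      rw [ht2]
      linarith
    rw [← hS, ← htdef]
    rw [div_mul_eq_mul_div, le_div_iff₀ hα]
    have hfin : (t * α) * t ≤ (2 * R * γN * Ψ) * t := by
      ring_nf
      ring_nf at hchain
      linarith
    exact le_of_mul_le_mul_right hfin ht
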